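/- arXiv:2408.00564 — 4 statements merged into one kernel-verified Lean document; each statement's English description precedes it below -/
import Mathlib

section
/- Let (X,d) be a complete metric space such that there exists k > 0 with the property: for all x, y, z ∈ X and every geodesic γ:[0,1]→X from x to y, d(z,γ(t))² ≤ (1-t)d(z,x)² + t d(z,y)² - (k/2)t(1-t)d(x,y)² for all t ∈ [0,1]. Then for every Borel probability measure μ on X with finite second moment, the function z ↦ ∫ d(z,x)² dμ(x) admits a unique minimizer (the barycenter of μ). -/
open MeasureTheory

/-- A curve `γ : ℝ → X` is a geodesic (on `[0,1]`) if it has constant speed `L`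
with `dist (γ s) (γ t) = L * |s - t|` for all `s, t ∈ [0,1]`. -/
def IsGeodesic {X : Type*} [MetricSpace X] (γ : ℝ → X) : Prop :=
  ∃ L : ℝ, 0 ≤ L ∧ ∀ s ∈ Set.Icc (0 : ℝ) 1, ∀ t ∈ Set.Icc (0 : ℝ) 1,
    dist (γ s) (γ t) = L * |s - t|

/-- In a complete geodesic metric space satisfying the uniform convexity inequality
with constant `k > 0`, every Borel probability measure with finite second moment
admits a unique barycenter, i.e. a unique minimizer of `z ↦ ∫ d(z,x)² dμ(x)`. -/
theorem exists_unique_barycenter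
    {X : Type*} [MetricSpace X] [CompleteSpace X] [MeasurableSpace X] [BorelSpace X]
    (hgeo : ∀ x y : X, ∃ γ : ℝ → X, IsGeodesic γ ∧ γ 0 = x ∧ γ 1 = y)
    (hconv : ∃ k : ℝ, 0 < k ∧ ∀ (x y z : X) (γ : ℝ → X), IsGeodesic γ → γ 0 = x → γ 1 = y →
      ∀ t ∈ Set.Icc (0 : ℝ) 1,
        dist z (γ t) ^ 2 ≤ (1 - t) * dist z x ^ 2 + t * dist z y ^ 2
          - (k / 2) * t * (1 - t) * dist x y ^ 2)
    (μ : Measure X) [IsProbabilityMeasure μ]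
    (hmom : ∀ z : X, Integrable (fun x => dist z x ^ 2) μ) :
    ∃! b : X, ∀ z : X, ∫ x, dist b x ^ 2 ∂μ ≤ ∫ x, dist z x ^ 2 ∂μ := by
  obtain ⟨k, hk, hconv⟩ := hconv
  set F : X → ℝ := fun z => ∫ x, dist z x ^ 2 ∂μ with hFdef
  -- X is nonempty
  haveI hne : Nonempty X := by
    by_contra h
    rw [not_nonempty_iff] at h
    have h1 : μ Set.univ = 1 := measure_univ
    rw [Set.univ_eq_empty_iff.2 h, measure_empty] at h1
    exact zero_ne_one h1
  -- integrability of dist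
  have hdint : ∀ z : X, Integrable (fun x => dist z x) μ := by
    intro z
    refine ((hmom z).add (integrable_const 1)).mono
      (continuous_const.dist continuous_id).aestronglyMeasurable ?_
    filter_upwards with x
    simp only [Pi.add_apply, Real.norm_eq_abs]
    rw [abs_of_nonneg dist_nonneg, abs_of_nonneg (by positivity : (0:ℝ) ≤ dist z x ^ 2 + 1)]
    nlinarith [sq_nonneg (dist z x - 1)]
  set G : X → ℝ := fun z => ∫ x, dist z x ∂μ with hGdef
  have hFnonneg : ∀ z, 0 ≤ F z := fun z => integral_nonneg fun x => sq_nonneg _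
  have hbdd : BddBelow (Set.range F) := ⟨0, by rintro _ ⟨z, rfl⟩; exact hFnonneg z⟩
  set m : ℝ := ⨅ z, F z with hm
  have hmle : ∀ z, m ≤ F z := fun z => ciInf_le hbdd z
  -- midpoint lemma
  have hmid : ∀ z z' : X, ∃ w : X,
      F w ≤ (1/2) * F z + (1/2) * F z' - (k/8) * dist z z' ^ 2 := by
    intro z z'
    obtain ⟨γ, hγ, h0, h1⟩ := hgeo z z'
    refine ⟨γ (1/2), ?_⟩
    have hpt : ∀ x : X, dist (γ (1/2)) x ^ 2 ≤
        (1/2) * dist z x ^ 2 + (1/2) * dist z' x ^ 2 - (k/8) * dist z z' ^ 2 := by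
      intro x
      have h := hconv z z' x γ hγ h0 h1 (1/2) (by norm_num)
      rw [dist_comm (γ (1/2)) x, dist_comm z x, dist_comm z' x]
      nlinarith [h]
    have hi1 : Integrable (fun x => (1/2) * dist z x ^ 2 + (1/2) * dist z' x ^ 2) μ := by
      exact ((hmom z).const_mul _).add ((hmom z').const_mul _)
    have hRint : Integrable (fun x =>
        (1/2) * dist z x ^ 2 + (1/2) * dist z' x ^ 2 - (k/8) * dist z z' ^ 2) μ := by
      exact hi1.sub (integrable_const _)
    calc F (γ (1/2)) ≤ ∫ x, ((1/2) * dist z x ^ 2 + (1/2) * dist z' x ^ 2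
          - (k/8) * dist z z' ^ 2) ∂μ := integral_mono (hmom _) hRint hpt
      _ = (1/2) * F z + (1/2) * F z' - (k/8) * dist z z' ^ 2 := by
          rw [integral_sub hi1 (integrable_const _),
            integral_add (by exact (hmom z).const_mul _) (by exact (hmom z').const_mul _),
            MeasureTheory.integral_const_mul, MeasureTheory.integral_const_mul, integral_const]
          simp
          rfl
  -- continuity estimate
  have hcont : ∀ z z' : X, F z' ≤ F z + dist z z' * (G z + G z') := by
    intro z z'
    have hpt : ∀ x : X, dist z' x ^ 2 ≤
        dist z x ^ 2 + dist z z' * (dist z x + dist z' x) := by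
      intro x
      have ht := dist_triangle z' z x
      rw [dist_comm z' z] at ht
      nlinarith [dist_nonneg (x := z) (y := x), dist_nonneg (x := z') (y := x),
        dist_nonneg (x := z) (y := z')]
    have hi2 : Integrable (fun x => dist z z' * (dist z x + dist z' x)) μ := by
      exact ((hdint z).add (hdint z')).const_mul _
    have hRint : Integrable (fun x =>
        dist z x ^ 2 + dist z z' * (dist z x + dist z' x)) μ := by
      exact (hmom z).add hi2
    calc F z' ≤ ∫ x, (dist z x ^ 2 + dist z z' * (dist z x + dist z' x)) ∂μ :=
          integral_mono (hmom _) hRint hpt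
      _ = F z + dist z z' * (G z + G z') := by
          rw [integral_add (hmom z) hi2, MeasureTheory.integral_const_mul,
            integral_add (hdint z) (hdint z')]
  -- G estimate
  have hGest : ∀ z b : X, G z ≤ G b + dist z b := by
    intro z b
    have hpt : ∀ x : X, dist z x ≤ dist b x + dist z b := by
      intro x
      have := dist_triangle z b x
      linarith [this]
    calc G z ≤ ∫ x, (dist b x + dist z b) ∂μ :=
          integral_mono (hdint z) ((hdint b).add (integrable_const _)) hpt
      _ = G b + dist z b := by
          rw [integral_add (hdint b) (integrable_const _), integral_const]
          simp
          rfl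
  -- minimizing sequence
  have hseq : ∀ n : ℕ, ∃ z : X, F z < m + 1/(n+1) := by
    intro n
    apply exists_lt_of_ciInf_lt
    have : (0:ℝ) < 1/((n:ℝ)+1) := by positivity
    linarith
  choose z hz using hseq
  -- Cauchy estimate
  have hest : ∀ n N : ℕ, dist (z n) (z N) ^ 2 ≤ (4/k) * (1/(n+1) + 1/(N+1)) := by
    intro n N
    obtain ⟨w, hw⟩ := hmid (z n) (z N)
    have h1 := hmle w
    have h2 := hz n
    have h3 := hz N
    have hk' : 0 < k := hk
    rw [div_mul_eq_mul_div, le_div_iff₀ hk']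
    nlinarith [hw, h1, h2, h3]
  have hcauchy : CauchySeq z := by
    rw [Metric.cauchySeq_iff']
    intro ε hε
    obtain ⟨N, hN⟩ := exists_nat_gt (8/(k*ε^2))
    refine ⟨N, fun n hn => ?_⟩
    have hNpos : (0:ℝ) < (N:ℝ) + 1 := by positivity
    have hd2 : dist (z n) (z N) ^ 2 < ε ^ 2 := by
      have h1 := hest n N
      have h2 : (1:ℝ)/(n+1) ≤ 1/(N+1) := by
        apply one_div_le_one_div_of_le hNpos
        have : (N:ℝ) ≤ n := Nat.cast_le.2 hn
        linarith
      have h3 : (4/k) * (1/(n+1) + 1/(N+1)) ≤ (8/k) * (1/(N+1)) := by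
        have h3' : (0:ℝ) ≤ (4/k) * (1/((N:ℝ)+1) - 1/((n:ℝ)+1)) :=
          mul_nonneg (by positivity) (by linarith)
        linarith [h3', (by ring : (8/k)*(1/((N:ℝ)+1)) - (4/k)*(1/((n:ℝ)+1) + 1/((N:ℝ)+1))
          = (4/k)*(1/((N:ℝ)+1) - 1/((n:ℝ)+1)))]
      have h4 : (8/k) * (1/((N:ℝ)+1)) < ε ^ 2 := by
        rw [mul_one_div, div_div, div_lt_iff₀ (by positivity)]
        have h5 : 8/(k*ε^2) < N := hN
        rw [div_lt_iff₀ (by positivity)] at h5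
        nlinarith
      linarith
    exact lt_of_pow_lt_pow_left₀ 2 (le_of_lt hε) hd2
  obtain ⟨b, hb⟩ := cauchySeq_tendsto_of_complete hcauchy
  -- F b ≤ m
  have hd0 : Filter.Tendsto (fun n => dist (z n) b) Filter.atTop (nhds 0) :=
    tendsto_iff_dist_tendsto_zero.1 hb
  have hFbm : F b ≤ m := by
    have hbound : ∀ n : ℕ, F b ≤ (m + 1/(n+1)) + dist (z n) b * (2 * G b + dist (z n) b) := by
      intro n
      have h1 := hcont (z n) b
      have h2 := hGest (z n) b
      have h3 := hz n
      nlinarith [dist_nonneg (x := z n) (y := b)]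
    have ha : Filter.Tendsto (fun n : ℕ => (m + 1/((n:ℝ)+1))
        + dist (z n) b * (2 * G b + dist (z n) b)) Filter.atTop (nhds ((m + 0) + 0 * (2 * G b + 0))) := by
      exact (tendsto_const_nhds.add tendsto_one_div_add_atTop_nhds_zero_nat).add
        (hd0.mul (tendsto_const_nhds.add hd0))
    rw [add_zero, zero_mul, add_zero] at ha
    exact ge_of_tendsto ha (Filter.Eventually.of_forall hbound)
  refine ⟨b, fun w => le_trans hFbm (hmle w), fun y hy => ?_⟩
  have hyb : F y = F b := le_antisymm (hy b) (le_trans hFbm (hmle y))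
  obtain ⟨w, hw⟩ := hmid y b
  have h1 : F y ≤ F w := hy w
  have hd2 : dist y b ^ 2 ≤ 0 := by nlinarith [hw, h1, hyb]
  have : dist y b = 0 := by
    nlinarith [dist_nonneg (x := y) (y := b), sq_nonneg (dist y b)]
  exact dist_eq_zero.1 this
end

section
/- Let (X,d) be a complete metric space satisfying the uniform convexity inequality: for all x,y,z ∈ X and every midpoint m of x and y, d(z,m)² ≤ ½d(z,x)² + ½d(z,y)² - (k/8)d(x,y)² with some constant k > 0, and assume midpoints exist for every pair. Let C ⊆ X be a closed subset that is closed under taking midpoints. Then for every x ∈ X there exists a unique point π(x) ∈ C such that d(x,π(x)) = inf_{y∈C} d(x,y). -/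
/-- `m` is a midpoint of `x` and `y`. -/
def IsMidpoint {X : Type*} [MetricSpace X] (m x y : X) : Prop :=
  dist x m = dist x y / 2 ∧ dist m y = dist x y / 2

/-- In a complete metric space with midpoints satisfying the uniform convexity
inequality `d(z,m)² ≤ ½d(z,x)² + ½d(z,y)² - (k/8)d(x,y)²` for some `k > 0`,
every nonempty closed midpoint-closed subset `C` admits, for each point `x`, a
unique nearest point `p ∈ C` (the orthogonal projection). -/
theorem exists_unique_nearest_point
    {X : Type*} [MetricSpace X] [CompleteSpace X]
    (k : ℝ) (hk : 0 < k)
    (hmid : ∀ x y : X, ∃ m : X, IsMidpoint m x y)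
    (hconv : ∀ x y z m : X, IsMidpoint m x y →
      dist z m ^ 2 ≤ (1 / 2) * dist z x ^ 2 + (1 / 2) * dist z y ^ 2 - (k / 8) * dist x y ^ 2)
    (C : Set X) (hC : IsClosed C) (hCne : C.Nonempty)
    (hCmid : ∀ x ∈ C, ∀ y ∈ C, ∀ m : X, IsMidpoint m x y → m ∈ C) :
    ∀ x : X, ∃! p : X, p ∈ C ∧ dist x p = sInf ((dist x) '' C) := by
  intro x
  set S : Set ℝ := (dist x) '' C with hS
  have hSne : S.Nonempty := hCne.image _
  have hSbd : BddBelow S := ⟨0, by rintro _ ⟨y, -, rfl⟩; exact dist_nonneg⟩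
  set d : ℝ := sInf S with hd
  have hd0 : 0 ≤ d := le_csInf hSne (by rintro _ ⟨y, -, rfl⟩; exact dist_nonneg)
  have hle : ∀ y ∈ C, d ≤ dist x y := fun y hy => csInf_le hSbd ⟨y, hy, rfl⟩
  -- the key estimate: for any two points of C, control their distance
  have key : ∀ u ∈ C, ∀ v ∈ C, (k / 8) * dist u v ^ 2 ≤
      (1 / 2) * dist x u ^ 2 + (1 / 2) * dist x v ^ 2 - d ^ 2 := by
    intro u hu v hv
    obtain ⟨m, hm⟩ := hmid u v
    have hmC : m ∈ C := hCmid u hu v hv m hm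
    have h1 := hconv u v x m hm
    have h2 : d ^ 2 ≤ dist x m ^ 2 :=
      pow_le_pow_left₀ hd0 (hle m hmC) 2
    nlinarith
  -- choose a minimizing sequence
  have hch : ∀ n : ℕ, ∃ y, y ∈ C ∧ dist x y < d + 1 / (n + 1) := by
    intro n
    obtain ⟨a, ⟨y, hy, rfl⟩, ha⟩ := Real.lt_sInf_add_pos hSne
      (by positivity : (0:ℝ) < 1 / (n + 1))
    exact ⟨y, hy, ha⟩
  choose y hyC hyd using hch
  -- Cauchy
  have hb : ∀ N n : ℕ, N ≤ n → dist x (y n) < d + 1 / (N + 1) := by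
    intro N n hN
    refine (hyd n).trans_le ?_
    have : (1:ℝ) / (n + 1) ≤ 1 / (N + 1) := by
      apply one_div_le_one_div_of_le (by positivity)
      exact_mod_cast Nat.succ_le_succ hN
    linarith
  have hcauchy : CauchySeq y := by
    refine cauchySeq_of_le_tendsto_0 (fun N : ℕ => Real.sqrt ((16 / k) * (d + 1) * (1 / (N + 1)))) ?_ ?_
    · intro n m N hn hm
      have hsq : dist (y n) (y m) ^ 2 ≤ (16 / k) * (d + 1) * (1 / (N + 1)) := by
        have h1 := key (y n) (hyC n) (y m) (hyC m)
        have h2 := hb N n hn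
        have h3 := hb N m hm
        have ha : (0:ℝ) < 1 / (N + 1) := by positivity
        have ha1 : (1:ℝ) / ((N:ℝ) + 1) ≤ 1 := by
          rw [div_le_one (by positivity)]; linarith [Nat.cast_nonneg (α := ℝ) N]
        have hxn : 0 ≤ dist x (y n) := dist_nonneg
        have hxm : 0 ≤ dist x (y m) := dist_nonneg
        rw [show (16 / k) * (d + 1) * (1 / ((N:ℝ) + 1)) = 16 * (d + 1) * (1 / ((N:ℝ) + 1)) / k
          from by ring, le_div_iff₀ hk]
        nlinarith [pow_le_pow_left₀ hxn h2.le 2, pow_le_pow_left₀ hxm h3.le 2]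
      calc dist (y n) (y m) = Real.sqrt (dist (y n) (y m) ^ 2) := by
            rw [Real.sqrt_sq dist_nonneg]
        _ ≤ _ := Real.sqrt_le_sqrt hsq
    · have h0 : Filter.Tendsto (fun N : ℕ => (16 / k) * (d + 1) * (1 / (N + 1))) Filter.atTop (nhds 0) := by
        have := tendsto_one_div_add_atTop_nhds_zero_nat (𝕜 := ℝ)
        simpa using this.const_mul ((16 / k) * (d + 1))
      have := h0.sqrt
      simpa using this
  obtain ⟨p, hp⟩ := cauchySeq_tendsto_of_complete hcauchy
  have hpC : p ∈ C := hC.mem_of_tendsto hp (Filter.Eventually.of_forall hyC)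
  have hdist : Filter.Tendsto (fun n => dist x (y n)) Filter.atTop (nhds (dist x p)) :=
    (continuous_dist.comp (Continuous.prodMk_right x)).continuousAt.tendsto.comp hp
  have hdist' : Filter.Tendsto (fun n => dist x (y n)) Filter.atTop (nhds d) := by
    apply tendsto_of_tendsto_of_tendsto_of_le_of_le (g := fun _ => d)
      (h := fun n : ℕ => d + 1 / (n + 1)) tendsto_const_nhds
    · simpa using tendsto_const_nhds.add (tendsto_one_div_add_atTop_nhds_zero_nat (𝕜 := ℝ))
    · exact fun n => hle (y n) (hyC n)
    · exact fun n => (hyd n).le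
  have hpd : dist x p = d := tendsto_nhds_unique hdist hdist'
  refine ⟨p, ⟨hpC, hpd⟩, ?_⟩
  rintro q ⟨hqC, hqd⟩
  have h1 := key q hqC p hpC
  rw [hqd, hpd] at h1
  have : dist q p ^ 2 ≤ 0 := by nlinarith
  have : dist q p = 0 := by nlinarith [sq_nonneg (dist q p), dist_nonneg (x := q) (y := p)]
  exact dist_eq_zero.mp this
end

section
/- Let (X,d) be a complete CAT(0) space, μ a Borel probability measure on X with finite second moment, and φ: X → ℝ a lower semi-continuous convex function that is μ-integrable. Then φ(𝔅(μ)) ≤ ∫ φ(x) dμ(x), where 𝔅(μ) is the barycenter of μ. -/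
open MeasureTheory
open Filter Topology

/-- A geodesic metric space is CAT(0) iff the squared distance satisfies the
convexity comparison inequality along all geodesics. -/
def CATZero (X : Type*) [MetricSpace X] : Prop :=
  (∀ x y : X, ∃ γ : ℝ → X, IsGeodesic γ ∧ γ 0 = x ∧ γ 1 = y) ∧
  ∀ (x y z : X) (γ : ℝ → X), IsGeodesic γ → γ 0 = x → γ 1 = y →
    ∀ t ∈ Set.Icc (0 : ℝ) 1,
      dist z (γ t) ^ 2 ≤ (1 - t) * dist z x ^ 2 + t * dist z y ^ 2
        - t * (1 - t) * dist x y ^ 2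

/-- A function on a geodesic metric space is convex if its composition with every
geodesic is convex. -/
def GeoConvexFun {X : Type*} [MetricSpace X] (φ : X → ℝ) : Prop :=
  ∀ (x y : X) (γ : ℝ → X), IsGeodesic γ → γ 0 = x → γ 1 = y →
    ∀ t ∈ Set.Icc (0 : ℝ) 1, φ (γ t) ≤ (1 - t) * φ x + t * φ y

/-- Auxiliary convexity lemma: in a CAT(0) space, for points `(x,u)` and `(y,v)`
in the epigraph of a geodesically convex function `φ`, there is a point `(z,w)`
in the epigraph realizing the CAT(0)-comparison convexity of
`F(x,s) = d(b,x)² + (m-s)²`. -/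
lemma jensen_combo {X : Type*} [MetricSpace X] (hX : CATZero X)
    {φ : X → ℝ} (hφconv : GeoConvexFun φ) (b : X) (m : ℝ)
    (x y : X) (u v : ℝ) (hx : φ x ≤ u) (hy : φ y ≤ v)
    (t : ℝ) (ht : t ∈ Set.Icc (0 : ℝ) 1) :
    ∃ z w, φ z ≤ w ∧
      dist b z ^ 2 + (m - w) ^ 2 ≤
        (1 - t) * (dist b x ^ 2 + (m - u) ^ 2) + t * (dist b y ^ 2 + (m - v) ^ 2)
          - t * (1 - t) * (dist x y ^ 2 + (u - v) ^ 2) := by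
  obtain ⟨γ, hγ, hγ0, hγ1⟩ := hX.1 x y
  have h0t : (0 : ℝ) ≤ t := ht.1
  have h1t : (0 : ℝ) ≤ 1 - t := by linarith [ht.2]
  refine ⟨γ t, (1 - t) * u + t * v, ?_, ?_⟩
  · have h1 := hφconv x y γ hγ hγ0 hγ1 t ht
    have h2 := mul_le_mul_of_nonneg_left hx h1t
    have h3 := mul_le_mul_of_nonneg_left hy h0t
    linarith
  · have h2 := hX.2 x y b γ hγ hγ0 hγ1 t ht
    have h3 : (m - ((1 - t) * u + t * v)) ^ 2
        = (1 - t) * (m - u) ^ 2 + t * (m - v) ^ 2 - t * (1 - t) * (u - v) ^ 2 := by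
      ring
    nlinarith [h2, h3]

/-- A sequence whose pairwise squared distances are controlled by `2(1/(n+1)+1/(k+1))`
is Cauchy. -/
lemma cauchySeq_of_sq_bound {Y : Type*} [PseudoMetricSpace Y] (f : ℕ → Y)
    (hf : ∀ n k : ℕ, dist (f n) (f k) ^ 2 ≤ 2 * (1 / (n + 1) + 1 / (k + 1))) :
    CauchySeq f := by
  rw [Metric.cauchySeq_iff']
  intro ε hε
  obtain ⟨N, hN⟩ := exists_nat_gt (4 / ε ^ 2)
  refine ⟨N, fun n hn => ?_⟩
  have hN0 : (0 : ℝ) < N + 1 := by positivity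
  have h1 : (4 : ℝ) / ε ^ 2 < N + 1 := by linarith
  have h2 : (4 : ℝ) * (1 / (N + 1)) < ε ^ 2 := by
    rw [mul_one_div, div_lt_iff₀ hN0]
    rw [div_lt_iff₀ (by positivity : (0 : ℝ) < ε ^ 2)] at h1
    linarith
  have h4 : (1 : ℝ) / (n + 1) ≤ 1 / (N + 1) := by
    apply one_div_le_one_div_of_le hN0
    have : (N : ℝ) ≤ n := Nat.cast_le.mpr hn
    linarith
  have h5 : dist (f n) (f N) ^ 2 < ε ^ 2 := by
    calc dist (f n) (f N) ^ 2 ≤ 2 * (1 / (n + 1) + 1 / (N + 1)) := hf n N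
    _ ≤ 4 * (1 / (N + 1)) := by linarith
    _ < ε ^ 2 := h2
  nlinarith [dist_nonneg (x := f n) (y := f N), hε]

/-- Jensen's inequality for barycenters in complete CAT(0) spaces: for a lower
semicontinuous convex integrable `φ`, we have `φ(𝔅(μ)) ≤ ∫ φ dμ`. -/
theorem barycenter_jensen
    {X : Type*} [MetricSpace X] [CompleteSpace X] [MeasurableSpace X] [BorelSpace X]
    (hX : CATZero X)
    (μ : Measure X) [IsProbabilityMeasure μ]
    (hmom : ∀ z : X, Integrable (fun x => dist z x ^ 2) μ)
    (φ : X → ℝ) (hφlsc : LowerSemicontinuous φ) (hφconv : GeoConvexFun φ)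
    (hφint : Integrable φ μ)
    (b : X) (hb : ∀ z : X, ∫ x, dist b x ^ 2 ∂μ ≤ ∫ x, dist z x ^ 2 ∂μ) :
    φ b ≤ ∫ x, φ x ∂μ := by
  classical
  set m : ℝ := ∫ x, φ x ∂μ with hm
  -- The squared-distance functional to the point (b, m) in X × ℝ
  set F : X → ℝ → ℝ := fun x s => dist b x ^ 2 + (m - s) ^ 2 with hF
  -- values of F on the epigraph of φ
  set A : Set ℝ := {r | ∃ x s, φ x ≤ s ∧ F x s = r} with hA
  have hAne : A.Nonempty := ⟨F b (φ b), b, φ b, le_refl _, rfl⟩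
  have hAbd : BddBelow A := by
    refine ⟨0, ?_⟩
    rintro r ⟨x, s, -, rfl⟩
    simp only [hF]
    positivity
  set I : ℝ := sInf A with hI
  have hIle : ∀ x s, φ x ≤ s → I ≤ F x s := fun x s h => csInf_le hAbd ⟨x, s, h, rfl⟩
  -- minimizing sequence
  have hseq : ∀ n : ℕ, ∃ q : X × ℝ, φ q.1 ≤ q.2 ∧ F q.1 q.2 < I + 1 / (n + 1) := by
    intro n
    have hpos : (0 : ℝ) < 1 / (n + 1) := by positivity
    obtain ⟨r, hrA, hr⟩ := Real.lt_sInf_add_pos hAne hpos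
    obtain ⟨x, s, hxs, rfl⟩ := hrA
    exact ⟨(x, s), hxs, hr⟩
  choose c hc1 hc2 using hseq
  set xs : ℕ → X := fun n => (c n).1 with hxsdef
  set ss : ℕ → ℝ := fun n => (c n).2 with hssdef
  -- the Cauchy estimate, via midpoints
  have hCau : ∀ n k : ℕ, dist (xs n) (xs k) ^ 2 + (ss n - ss k) ^ 2
      ≤ 2 * (1 / (n + 1) + 1 / (k + 1)) := by
    intro n k
    obtain ⟨z, w, hzw, hle⟩ := jensen_combo hX hφconv b m (xs n) (xs k) (ss n) (ss k)
      (hc1 n) (hc1 k) (1 / 2) (by constructor <;> norm_num)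
    have h1 := hIle z w hzw
    have h2 := hc2 n
    have h3 := hc2 k
    simp only [hF] at h1 hle h2 h3 ⊢
    nlinarith [h1, hle, h2, h3]
  have hCx : CauchySeq xs := by
    apply cauchySeq_of_sq_bound
    intro n k
    have := hCau n k
    nlinarith [sq_nonneg (ss n - ss k)]
  have hCs : CauchySeq ss := by
    apply cauchySeq_of_sq_bound
    intro n k
    have := hCau n k
    have hd : dist (ss n) (ss k) ^ 2 = (ss n - ss k) ^ 2 := by
      rw [Real.dist_eq, sq_abs]
    nlinarith [sq_nonneg (dist (xs n) (xs k))]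
  obtain ⟨p₁, hp1⟩ := cauchySeq_tendsto_of_complete hCx
  obtain ⟨p₂, hp2⟩ := cauchySeq_tendsto_of_complete hCs
  -- the limit lies in the epigraph, by lower semicontinuity
  have hφp : φ p₁ ≤ p₂ := by
    by_contra h
    push_neg at h
    set y : ℝ := (p₂ + φ p₁) / 2 with hy
    have hy1 : y < φ p₁ := by rw [hy]; linarith
    have hy2 : p₂ < y := by rw [hy]; linarith
    have hev1 : ∀ᶠ n in atTop, y < φ (xs n) := hp1.eventually (hφlsc p₁ y hy1)
    have hev2 : ∀ᶠ n in atTop, ss n < y := hp2.eventually (eventually_lt_nhds hy2)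
    obtain ⟨n, h1, h2⟩ := (hev1.and hev2).exists
    exact absurd (lt_of_lt_of_le h1 (hc1 n)) (not_lt.mpr h2.le)
  -- the limit attains the infimum
  have hFlim : Tendsto (fun n => F (xs n) (ss n)) atTop (𝓝 (F p₁ p₂)) := by
    simp only [hF]
    exact ((tendsto_const_nhds.dist hp1).pow 2).add ((tendsto_const_nhds.sub hp2).pow 2)
  have hFlim' : Tendsto (fun n => F (xs n) (ss n)) atTop (𝓝 I) := by
    have hup : Tendsto (fun n : ℕ => I + 1 / ((n : ℝ) + 1)) atTop (𝓝 I) := by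
      have h0 := tendsto_one_div_add_atTop_nhds_zero_nat (𝕜 := ℝ)
      have h := tendsto_const_nhds (x := I) (f := atTop (α := ℕ))
      simpa using h.add h0
    exact tendsto_of_tendsto_of_tendsto_of_le_of_le tendsto_const_nhds hup
      (fun n => hIle (xs n) (ss n) (hc1 n)) (fun n => (hc2 n).le)
  have hFp' : dist b p₁ ^ 2 + (m - p₂) ^ 2 = I := by
    have := tendsto_nhds_unique hFlim hFlim'
    simpa [hF] using this
  -- the key "projection" inequality
  have hkey : ∀ x : X, I + (dist p₁ x ^ 2 + (p₂ - φ x) ^ 2) ≤ F x (φ x) := by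
    intro x
    have hG0 : (0 : ℝ) ≤ dist p₁ x ^ 2 + (p₂ - φ x) ^ 2 := by positivity
    have step : ∀ t : ℝ, 0 < t → t ≤ 1 →
        I + (1 - t) * (dist p₁ x ^ 2 + (p₂ - φ x) ^ 2) ≤ F x (φ x) := by
      intro t ht0 ht1
      obtain ⟨z, w, hzw, hle⟩ := jensen_combo hX hφconv b m p₁ x p₂ (φ x)
        hφp (le_refl _) t ⟨ht0.le, ht1⟩
      have h1 := hIle z w hzw
      simp only [hF] at h1 hle ⊢
      have hcomb : I ≤ (1 - t) * I + t * (dist b x ^ 2 + (m - φ x) ^ 2)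
          - t * (1 - t) * (dist p₁ x ^ 2 + (p₂ - φ x) ^ 2) := by
        rw [← hFp']
        linarith
      have h2 : t * (I + (1 - t) * (dist p₁ x ^ 2 + (p₂ - φ x) ^ 2))
          ≤ t * (dist b x ^ 2 + (m - φ x) ^ 2) := by nlinarith [hcomb]
      exact le_of_mul_le_mul_left h2 ht0
    refine le_of_forall_pos_le_add (fun ε hε => ?_)
    set G : ℝ := dist p₁ x ^ 2 + (p₂ - φ x) ^ 2 with hG
    set T : ℝ := min 1 (ε / (G + 1)) with hT
    have ht0 : (0 : ℝ) < T := lt_min one_pos (by positivity)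
    have h := step T ht0 (min_le_left _ _)
    have htle : T ≤ ε / (G + 1) := min_le_right _ _
    have hmul : T * G ≤ ε := by
      have h1 : T * (G + 1) ≤ (ε / (G + 1)) * (G + 1) :=
        mul_le_mul_of_nonneg_right htle (by linarith)
      have h2 : (ε / (G + 1)) * (G + 1) = ε := div_mul_cancel₀ _ (by positivity)
      nlinarith [ht0]
    have hexp : (1 - T) * G = G - T * G := by ring
    linarith
  -- pointwise inequality suitable for integration
  have hpt : ∀ x : X, I + dist p₁ x ^ 2 + (p₂ - m) ^ 2 + 2 * (p₂ - m) * (m - φ x)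
      ≤ dist b x ^ 2 := by
    intro x
    have h := hkey x
    simp only [hF] at h
    have hid : (p₂ - φ x) ^ 2 - (m - φ x) ^ 2
        = (p₂ - m) ^ 2 + 2 * (p₂ - m) * (m - φ x) := by ring
    linarith
  -- integrate the pointwise inequality
  have i0 : Integrable (fun x => m - φ x) μ := (integrable_const m).sub hφint
  have i1 : Integrable (fun x => I + dist p₁ x ^ 2) μ := (integrable_const I).add (hmom p₁)
  have i2 : Integrable (fun x => I + dist p₁ x ^ 2 + (p₂ - m) ^ 2) μ :=
    i1.add (integrable_const _)
  have i3 : Integrable (fun x => 2 * (p₂ - m) * (m - φ x)) μ := i0.const_mul _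
  have hLint : Integrable
      (fun x => I + dist p₁ x ^ 2 + (p₂ - m) ^ 2 + 2 * (p₂ - m) * (m - φ x)) μ := i2.add i3
  have hint := integral_mono hLint (hmom b) hpt
  have e0 : ∫ x, (m - φ x) ∂μ = 0 := by
    rw [integral_sub (integrable_const m) hφint, integral_const]
    simp [← hm]
  have e1 : ∫ x, (I + dist p₁ x ^ 2 + (p₂ - m) ^ 2 + 2 * (p₂ - m) * (m - φ x)) ∂μ
      = I + (∫ x, dist p₁ x ^ 2 ∂μ) + (p₂ - m) ^ 2 := by
    calc ∫ x, (I + dist p₁ x ^ 2 + (p₂ - m) ^ 2 + 2 * (p₂ - m) * (m - φ x)) ∂μ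
        = (∫ x, (I + dist p₁ x ^ 2 + (p₂ - m) ^ 2) ∂μ)
            + ∫ x, 2 * (p₂ - m) * (m - φ x) ∂μ := integral_add i2 i3
      _ = ((∫ x, (I + dist p₁ x ^ 2) ∂μ) + ∫ x, ((p₂ - m) ^ 2 : ℝ) ∂μ)
            + 2 * (p₂ - m) * ∫ x, (m - φ x) ∂μ := by
          rw [integral_add i1 (integrable_const _), integral_const_mul _ _]
      _ = (((∫ x, (I : ℝ) ∂μ) + ∫ x, dist p₁ x ^ 2 ∂μ) + ∫ x, ((p₂ - m) ^ 2 : ℝ) ∂μ)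
            + 2 * (p₂ - m) * 0 := by
          rw [integral_add (integrable_const I) (hmom p₁), e0]
      _ = I + (∫ x, dist p₁ x ^ 2 ∂μ) + (p₂ - m) ^ 2 := by
          rw [integral_const, integral_const]
          simp
  rw [e1] at hint
  have h3 := hb p₁
  -- conclude: I + (p₂ - m)² ≤ 0, hence p₁ = b, p₂ = m
  have hfin : I + (p₂ - m) ^ 2 ≤ 0 := by linarith
  have hdsq : dist b p₁ ^ 2 ≤ 0 := by
    linarith [sq_nonneg (p₂ - m), sq_nonneg (m - p₂), hFp']
  have hd0 : dist b p₁ = 0 := by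
    have h4 : dist b p₁ ^ 2 = 0 := le_antisymm hdsq (sq_nonneg _)
    exact (pow_eq_zero_iff (by norm_num : (2 : ℕ) ≠ 0)).mp h4
  have hp2m : p₂ = m := by
    have h5 : (p₂ - m) ^ 2 ≤ 0 := by
      linarith [sq_nonneg (dist b p₁), sq_nonneg (m - p₂), hFp']
    have h4 : (p₂ - m) ^ 2 = 0 := le_antisymm h5 (sq_nonneg _)
    have h6 := (pow_eq_zero_iff (by norm_num : (2 : ℕ) ≠ 0)).mp h4
    linarith
  have hbp : b = p₁ := by rwa [dist_eq_zero] at hd0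
  calc φ b = φ p₁ := by rw [hbp]
  _ ≤ p₂ := hφp
  _ = m := hp2m
end

section
/- Let (X,d) be a complete CAT(0) space and μ₁, μ₂ ∈ 𝒫₂(X). Then d(𝔅(μ₁), 𝔅(μ₂)) ≤ W₁(μ₁, μ₂) ≤ W₂(μ₁, μ₂), where 𝔅 denotes the barycenter map and W_p the Wasserstein-p distance. -/
open MeasureTheory

/-- The Wasserstein-`p` distance between two Borel probability measures, defined
as the infimum over couplings of the `p`-th cost. -/
noncomputable def wassersteinDist {X : Type*} [MetricSpace X] [MeasurableSpace X]
    (p : ℝ) (μ₁ μ₂ : Measure X) : ℝ :=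
  sInf {r : ℝ | ∃ π : Measure (X × X), IsProbabilityMeasure π ∧
    π.map Prod.fst = μ₁ ∧ π.map Prod.snd = μ₂ ∧
    r = (∫ w : X × X, dist w.1 w.2 ^ p ∂π) ^ (1 / p)}

set_option linter.unusedSectionVars false

namespace BaryAux

variable {X : Type*} [MetricSpace X]

lemma geodesic_dist {γ : ℝ → X} (h : IsGeodesic γ) {s t : ℝ}
    (hs : s ∈ Set.Icc (0:ℝ) 1) (ht : t ∈ Set.Icc (0:ℝ) 1) :
    dist (γ s) (γ t) = dist (γ 0) (γ 1) * |s - t| := by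
  obtain ⟨L, hL0, hL⟩ := h
  have h01 : dist (γ 0) (γ 1) = L := by
    have h := hL 0 ⟨le_refl _, by norm_num⟩ 1 ⟨by norm_num, le_refl _⟩
    rw [show |(0:ℝ) - 1| = 1 by norm_num, mul_one] at h
    exact h
  rw [h01, hL s hs t ht]

/-- Weak quadruple inequality (one application of CN at the midpoint of the
diagonal `[a,y]`). -/
lemma weakCS (hX : CATZero X) (a b x y : X) :
    dist a y ^ 2 + dist b x ^ 2 - dist a x ^ 2 - dist b y ^ 2 ≤
      dist a b ^ 2 + dist x y ^ 2 := by
  obtain ⟨γ, hγ, h0, h1⟩ := hX.1 a y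
  have ht : (1/2 : ℝ) ∈ Set.Icc (0:ℝ) 1 := by norm_num
  have hx := hX.2 a y x γ hγ h0 h1 (1/2) ht
  have hb := hX.2 a y b γ hγ h0 h1 (1/2) ht
  have tri : dist x b ≤ dist x (γ (1/2)) + dist b (γ (1/2)) := by
    rw [dist_comm b (γ (1/2))]; exact dist_triangle _ _ _
  have h1' : dist x b ^ 2 ≤ 2 * dist x (γ (1/2)) ^ 2 + 2 * dist b (γ (1/2)) ^ 2 := by
    nlinarith [dist_nonneg (x := x) (y := b), dist_nonneg (x := x) (y := γ (1/2)),
      dist_nonneg (x := b) (y := γ (1/2)), sq_nonneg (dist x (γ (1/2)) - dist b (γ (1/2)))]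
  have c1 : dist b x ^ 2 = dist x b ^ 2 := by rw [dist_comm]
  have c2 : dist a x ^ 2 = dist x a ^ 2 := by rw [dist_comm]
  have c3 : dist b a ^ 2 = dist a b ^ 2 := by rw [dist_comm]
  linarith

open Finset in
lemma steppedCS (hX : CATZero X) (a b x y : X) (n m : ℕ) (hn : 0 < n) (hm : 0 < m) :
    dist a y ^ 2 + dist b x ^ 2 - dist a x ^ 2 - dist b y ^ 2 ≤
      (m : ℝ) / n * dist a b ^ 2 + (n : ℝ) / m * dist x y ^ 2 := by
  obtain ⟨σ, hσ, hσ0, hσ1⟩ := hX.1 a b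
  obtain ⟨γ, hγ, hγ0, hγ1⟩ := hX.1 x y
  have hnR : (0:ℝ) < n := by exact_mod_cast hn
  have hmR : (0:ℝ) < m := by exact_mod_cast hm
  set c : ℕ → X := fun i => σ ((i : ℝ) / n) with hc
  set g : ℕ → X := fun j => γ ((j : ℝ) / m) with hg
  set F : ℕ → ℕ → ℝ := fun i j => dist (c i) (g j) ^ 2 with hF
  have hmemn : ∀ i : ℕ, i ≤ n → ((i : ℝ) / n) ∈ Set.Icc (0:ℝ) 1 := by
    intro i hi
    refine ⟨by positivity, ?_⟩
    rw [div_le_one hnR]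
    exact_mod_cast hi
  have hmemm : ∀ j : ℕ, j ≤ m → ((j : ℝ) / m) ∈ Set.Icc (0:ℝ) 1 := by
    intro j hj
    refine ⟨by positivity, ?_⟩
    rw [div_le_one hmR]
    exact_mod_cast hj
  have hcd : ∀ i : ℕ, i + 1 ≤ n → dist (c i) (c (i+1)) = dist a b / n := by
    intro i hi
    have h := geodesic_dist hσ (hmemn i (by omega)) (hmemn (i+1) hi)
    rw [hσ0, hσ1] at h
    show dist (σ ((i:ℝ)/n)) (σ ((((i+1):ℕ):ℝ)/n)) = dist a b / n
    rw [h]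
    push_cast
    rw [show (i : ℝ) / n - ((i:ℝ)+1) / n = -(1/n) by ring, abs_neg,
      abs_of_nonneg (by positivity : (0:ℝ) ≤ 1/(n:ℝ))]
    ring
  have hgd : ∀ j : ℕ, j + 1 ≤ m → dist (g j) (g (j+1)) = dist x y / m := by
    intro j hj
    have h := geodesic_dist hγ (hmemm j (by omega)) (hmemm (j+1) hj)
    rw [hγ0, hγ1] at h
    show dist (γ ((j:ℝ)/m)) (γ ((((j+1):ℕ):ℝ)/m)) = dist x y / m
    rw [h]
    push_cast
    rw [show (j : ℝ) / m - ((j:ℝ)+1) / m = -(1/m) by ring, abs_neg,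
      abs_of_nonneg (by positivity : (0:ℝ) ≤ 1/(m:ℝ))]
    ring
  -- telescoping identity
  have tele : ∑ i ∈ range n, ∑ j ∈ range m,
      (F i (j+1) + F (i+1) j - F i j - F (i+1) (j+1))
      = F 0 m + F n 0 - F 0 0 - F n m := by
    have inner : ∀ i : ℕ, ∑ j ∈ range m,
        (F i (j+1) + F (i+1) j - F i j - F (i+1) (j+1))
        = (F i m - F i 0) - (F (i+1) m - F (i+1) 0) := by
      intro i
      have t1 : ∑ j ∈ range m, (F i (j+1) - F i j) = F i m - F i 0 :=
        Finset.sum_range_sub (fun j => F i j) m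
      have t2 : ∑ j ∈ range m, (F (i+1) (j+1) - F (i+1) j) = F (i+1) m - F (i+1) 0 :=
        Finset.sum_range_sub (fun j => F (i+1) j) m
      calc ∑ j ∈ range m, (F i (j+1) + F (i+1) j - F i j - F (i+1) (j+1))
          = ∑ j ∈ range m, ((F i (j+1) - F i j) - (F (i+1) (j+1) - F (i+1) j)) := by
            apply Finset.sum_congr rfl; intro j _; ring
        _ = (∑ j ∈ range m, (F i (j+1) - F i j))
            - ∑ j ∈ range m, (F (i+1) (j+1) - F (i+1) j) := Finset.sum_sub_distrib _ _
        _ = (F i m - F i 0) - (F (i+1) m - F (i+1) 0) := by rw [t1, t2]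
    rw [Finset.sum_congr rfl (fun i _ => inner i)]
    have t3 : ∑ i ∈ range n, ((fun i => F i m - F i 0) (i+1) - (fun i => F i m - F i 0) i)
        = (F n m - F n 0) - (F 0 m - F 0 0) :=
      Finset.sum_range_sub (fun i => F i m - F i 0) n
    have : ∑ i ∈ range n, ((F i m - F i 0) - (F (i+1) m - F (i+1) 0))
        = -((F n m - F n 0) - (F 0 m - F 0 0)) := by
      rw [← t3, ← Finset.sum_neg_distrib]
      apply Finset.sum_congr rfl; intro i _; ring
    rw [this]; ring
  have bound : F 0 m + F n 0 - F 0 0 - F n m ≤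
      (n : ℝ) * m * ((dist a b / n) ^ 2 + (dist x y / m) ^ 2) := by
    rw [← tele]
    calc ∑ i ∈ range n, ∑ j ∈ range m,
        (F i (j+1) + F (i+1) j - F i j - F (i+1) (j+1))
        ≤ ∑ i ∈ range n, ∑ j ∈ range m,
          ((dist a b / n) ^ 2 + (dist x y / m) ^ 2) := by
          apply Finset.sum_le_sum; intro i hi
          apply Finset.sum_le_sum; intro j hj
          have hi' : i + 1 ≤ n := Finset.mem_range.mp hi
          have hj' : j + 1 ≤ m := Finset.mem_range.mp hj
          have w := weakCS hX (c i) (c (i+1)) (g j) (g (j+1))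
          rw [hcd i hi', hgd j hj'] at w
          exact w
      _ = (n : ℝ) * m * ((dist a b / n) ^ 2 + (dist x y / m) ^ 2) := by
          simp [Finset.sum_const, Finset.card_range]; ring
  have endpts : F 0 m + F n 0 - F 0 0 - F n m
      = dist a y ^ 2 + dist b x ^ 2 - dist a x ^ 2 - dist b y ^ 2 := by
    have hc0 : c 0 = a := by rw [hc]; simp; rw [hσ0]
    have hcn : c n = b := by
      rw [hc]; simp only []
      rw [div_self (ne_of_gt hnR), hσ1]
    have hg0 : g 0 = x := by rw [hg]; simp; rw [hγ0]
    have hgm : g m = y := by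
      rw [hg]; simp only []
      rw [div_self (ne_of_gt hmR), hγ1]
    rw [hF]; simp only []
    rw [hc0, hcn, hg0, hgm]
  rw [endpts] at bound
  calc dist a y ^ 2 + dist b x ^ 2 - dist a x ^ 2 - dist b y ^ 2
      ≤ (n : ℝ) * m * ((dist a b / n) ^ 2 + (dist x y / m) ^ 2) := bound
    _ = (m : ℝ) / n * dist a b ^ 2 + (n : ℝ) / m * dist x y ^ 2 := by
        field_simp

/-- Berg–Nikolaev quadruple (Cauchy–Schwarz) inequality in CAT(0) spaces. -/
lemma csq (hX : CATZero X) (a b x y : X) :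
    dist a y ^ 2 + dist b x ^ 2 - dist a x ^ 2 - dist b y ^ 2 ≤
      2 * dist a b * dist x y := by
  by_cases hA0 : dist a b = 0
  · have hab : a = b := dist_eq_zero.mp hA0
    subst hab
    rw [hA0]
    have c1 : dist a x ^ 2 = dist a x ^ 2 := rfl
    linarith [dist_nonneg (x := x) (y := y)]
  by_cases hd0 : dist x y = 0
  · have hxy : x = y := dist_eq_zero.mp hd0
    subst hxy
    rw [hd0]
    linarith
  have hA : 0 < dist a b := lt_of_le_of_ne dist_nonneg (Ne.symm hA0)
  have hd : 0 < dist x y := lt_of_le_of_ne dist_nonneg (Ne.symm hd0)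
  apply le_of_forall_pos_le_add
  intro ε hε
  set A := dist a b with hAdef
  set δ := dist x y with hddef
  have hq' : δ / A < δ / A + ε / A ^ 2 := by
    have : 0 < ε / A ^ 2 := by positivity
    linarith
  obtain ⟨q, hq1, hq2⟩ := exists_rat_btwn hq'
  have hq0 : (0:ℝ) < (q:ℝ) := lt_trans (by positivity) hq1
  have hq0' : 0 < q := by exact_mod_cast hq0
  set n := q.den with hndef
  set m := q.num.toNat with hmdef
  have hn : 0 < n := q.pos
  have hmnum : 0 < q.num := Rat.num_pos.mpr hq0'
  have hm : 0 < m := by omega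
  have hq_eq : (q:ℝ) = (m:ℝ)/(n:ℝ) := by
    rw [Rat.cast_def]
    congr 1
    have h := Int.toNat_of_nonneg (le_of_lt hmnum)
    exact_mod_cast h.symm
  have hnR : (0:ℝ) < n := by exact_mod_cast hn
  have hmR : (0:ℝ) < m := by exact_mod_cast hm
  have step := steppedCS hX a b x y n m hn hm
  have hinv : (n:ℝ)/(m:ℝ) = 1/(q:ℝ) := by
    rw [hq_eq]
    field_simp
  have hfrac : (m:ℝ)/(n:ℝ) = (q:ℝ) := hq_eq.symm
  rw [hfrac, hinv] at step
  -- bound q*A² + (1/q)*δ² ≤ 2Aδ + ε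
  have e1 : (q:ℝ) * A ^ 2 ≤ δ * A + ε := by
    have h2 : (q:ℝ) * A ^ 2 ≤ (δ / A + ε / A ^ 2) * A ^ 2 :=
      mul_le_mul_of_nonneg_right (le_of_lt hq2) (sq_nonneg A)
    have h3 : (δ / A + ε / A ^ 2) * A ^ 2 = δ * A + ε := by
      field_simp
    linarith
  have e2 : 1/(q:ℝ) * δ ^ 2 ≤ A * δ := by
    rw [div_mul_eq_mul_div, one_mul, div_le_iff₀ hq0]
    have hδq : δ < (q:ℝ) * A := by
      rw [div_lt_iff₀ hA] at hq1
      linarith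
    nlinarith
  linarith

section Meas

variable [MeasurableSpace X] [BorelSpace X] [SecondCountableTopology X]

lemma variance_ineq (hX : CATZero X) (μ : Measure X) [IsProbabilityMeasure μ]
    (hmom : ∀ z : X, Integrable (fun x => dist z x ^ 2) μ) (b : X)
    (hb : ∀ z : X, ∫ x, dist b x ^ 2 ∂μ ≤ ∫ x, dist z x ^ 2 ∂μ) (z : X) :
    ∫ x, dist b x ^ 2 ∂μ + dist b z ^ 2 ≤ ∫ x, dist z x ^ 2 ∂μ := by
  obtain ⟨γ, hγ, h0, h1⟩ := hX.1 b z
  have main : ∀ t : ℝ, t ∈ Set.Ioo (0:ℝ) 1 →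
      ∫ x, dist b x ^ 2 ∂μ + (1 - t) * dist b z ^ 2 ≤ ∫ x, dist z x ^ 2 ∂μ := by
    intro t htt
    have hIcc : t ∈ Set.Icc (0:ℝ) 1 := ⟨le_of_lt htt.1, le_of_lt htt.2⟩
    have hpt : ∀ x, dist (γ t) x ^ 2 ≤
        (1 - t) * dist b x ^ 2 + t * dist z x ^ 2 - t * (1-t) * dist b z ^ 2 := by
      intro x
      have h := hX.2 b z x γ hγ h0 h1 t hIcc
      have c1 : dist x (γ t) ^ 2 = dist (γ t) x ^ 2 := by rw [dist_comm]
      have c2 : dist x b ^ 2 = dist b x ^ 2 := by rw [dist_comm]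
      have c3 : dist x z ^ 2 = dist z x ^ 2 := by rw [dist_comm]
      rw [c1, c2, c3] at h
      exact h
    have hint : Integrable (fun x => (1 - t) * dist b x ^ 2 + t * dist z x ^ 2
        - t * (1-t) * dist b z ^ 2) μ :=
      (((hmom b).const_mul _).add ((hmom z).const_mul _)).sub (integrable_const _)
    have step1 : ∫ x, dist b x ^ 2 ∂μ ≤ ∫ x, dist (γ t) x ^ 2 ∂μ := hb (γ t)
    have step2 : ∫ x, dist (γ t) x ^ 2 ∂μ ≤
        ∫ x, ((1-t) * dist b x ^ 2 + t * dist z x ^ 2 - t*(1-t)*dist b z ^ 2) ∂μ :=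
      integral_mono (hmom (γ t)) hint hpt
    have step3 : ∫ x, ((1-t)*dist b x ^ 2 + t*dist z x ^ 2 - t*(1-t)*dist b z ^ 2) ∂μ
        = (1-t) * ∫ x, dist b x ^ 2 ∂μ + t * ∫ x, dist z x ^ 2 ∂μ - t*(1-t)*dist b z ^ 2 := by
      have i1 : Integrable (fun x => (1-t) * dist b x ^ 2) μ := (hmom b).const_mul _
      have i2 : Integrable (fun x => t * dist z x ^ 2) μ := (hmom z).const_mul _
      have i12 : Integrable (fun x => (1-t) * dist b x ^ 2 + t * dist z x ^ 2) μ := i1.add i2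
      rw [integral_sub i12 (integrable_const _), integral_add i1 i2,
        integral_const_mul, integral_const_mul, integral_const]
      simp [measure_univ]
    have ht0 : 0 < t := htt.1
    nlinarith [step1, step2, step3]
  by_cases hD : dist b z = 0
  · rw [hD]
    simpa using hb z
  · have hD2 : 0 < dist b z ^ 2 :=
      pow_pos (lt_of_le_of_ne dist_nonneg (Ne.symm hD)) 2
    apply le_of_forall_pos_le_add
    intro ε hε
    set t := min (1/2 : ℝ) (ε / dist b z ^ 2) with htdef
    have ht : t ∈ Set.Ioo (0:ℝ) 1 :=
      ⟨lt_min (by norm_num) (by positivity), lt_of_le_of_lt (min_le_left _ _) (by norm_num)⟩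
    have hmain := main t ht
    have htD : t * dist b z ^ 2 ≤ ε := by
      calc t * dist b z ^ 2 ≤ (ε / dist b z ^ 2) * dist b z ^ 2 :=
            mul_le_mul_of_nonneg_right (min_le_right _ _) (le_of_lt hD2)
        _ = ε := div_mul_cancel₀ _ (ne_of_gt hD2)
    linarith

lemma integral_fst {π : Measure (X × X)} {μ : Measure X}
    (h : π.map Prod.fst = μ) {f : X → ℝ} (hf : Continuous f) :
    ∫ w : X × X, f w.1 ∂π = ∫ x, f x ∂μ := by
  rw [← h, integral_map measurable_fst.aemeasurable
    (h ▸ hf.aestronglyMeasurable : AEStronglyMeasurable f (π.map Prod.fst))]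

lemma integral_snd {π : Measure (X × X)} {μ : Measure X}
    (h : π.map Prod.snd = μ) {f : X → ℝ} (hf : Continuous f) :
    ∫ w : X × X, f w.2 ∂π = ∫ x, f x ∂μ := by
  rw [← h, integral_map measurable_snd.aemeasurable
    (h ▸ hf.aestronglyMeasurable : AEStronglyMeasurable f (π.map Prod.snd))]

lemma integrable_fst {π : Measure (X × X)} {μ : Measure X}
    (h : π.map Prod.fst = μ) {f : X → ℝ} (hf : Continuous f)
    (hi : Integrable f μ) : Integrable (fun w : X × X => f w.1) π := by
  have := (integrable_map_measure
    (h ▸ hf.aestronglyMeasurable : AEStronglyMeasurable f (π.map Prod.fst))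
    measurable_fst.aemeasurable).mp (by rw [h]; exact hi)
  exact this

lemma integrable_snd {π : Measure (X × X)} {μ : Measure X}
    (h : π.map Prod.snd = μ) {f : X → ℝ} (hf : Continuous f)
    (hi : Integrable f μ) : Integrable (fun w : X × X => f w.2) π := by
  have := (integrable_map_measure
    (h ▸ hf.aestronglyMeasurable : AEStronglyMeasurable f (π.map Prod.snd))
    measurable_snd.aemeasurable).mp (by rw [h]; exact hi)
  exact this

lemma cont_dist_sq (z : X) : Continuous (fun x => dist z x ^ 2) :=
  (continuous_const.dist continuous_id).pow 2

/-- The distance function is integrable w.r.t. any coupling whose marginals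
have finite second moments. -/
lemma integrable_dist_coupling {π : Measure (X × X)} [IsProbabilityMeasure π]
    {μ₁ μ₂ : Measure X}
    (h1 : π.map Prod.fst = μ₁) (h2 : π.map Prod.snd = μ₂)
    (hm1 : ∀ z : X, Integrable (fun x => dist z x ^ 2) μ₁)
    (hm2 : ∀ z : X, Integrable (fun x => dist z x ^ 2) μ₂) (b : X) :
    Integrable (fun w : X × X => dist w.1 w.2) π := by
  have g1 : Integrable (fun w : X × X => dist b w.1 ^ 2) π :=
    integrable_fst h1 (cont_dist_sq b) (hm1 b)
  have g2 : Integrable (fun w : X × X => dist b w.2 ^ 2) π :=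
    integrable_snd h2 (cont_dist_sq b) (hm2 b)
  have hbound : Integrable (fun w : X × X =>
      (1 + dist b w.1 ^ 2) + (1 + dist b w.2 ^ 2)) π :=
    ((integrable_const _).add g1).add ((integrable_const _).add g2)
  apply hbound.mono' (continuous_dist.aestronglyMeasurable)
  filter_upwards with w
  rw [Real.norm_eq_abs, abs_of_nonneg dist_nonneg]
  have tri : dist w.1 w.2 ≤ dist b w.1 + dist b w.2 := by
    rw [dist_comm b w.1]
    exact dist_triangle _ _ _
  nlinarith [sq_nonneg (dist b w.1 - 1), sq_nonneg (dist b w.2 - 1),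
    dist_nonneg (x := b) (y := w.1), dist_nonneg (x := b) (y := w.2)]

/-- Same for squared distance. -/
lemma integrable_dist_sq_coupling {π : Measure (X × X)} [IsProbabilityMeasure π]
    {μ₁ μ₂ : Measure X}
    (h1 : π.map Prod.fst = μ₁) (h2 : π.map Prod.snd = μ₂)
    (hm1 : ∀ z : X, Integrable (fun x => dist z x ^ 2) μ₁)
    (hm2 : ∀ z : X, Integrable (fun x => dist z x ^ 2) μ₂) (b : X) :
    Integrable (fun w : X × X => dist w.1 w.2 ^ 2) π := by
  have g1 : Integrable (fun w : X × X => dist b w.1 ^ 2) π :=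
    integrable_fst h1 (cont_dist_sq b) (hm1 b)
  have g2 : Integrable (fun w : X × X => dist b w.2 ^ 2) π :=
    integrable_snd h2 (cont_dist_sq b) (hm2 b)
  have hbound : Integrable (fun w : X × X =>
      2 * dist b w.1 ^ 2 + 2 * dist b w.2 ^ 2) π :=
    (g1.const_mul _).add (g2.const_mul _)
  apply hbound.mono' ((continuous_dist.pow 2).aestronglyMeasurable)
  filter_upwards with w
  rw [Real.norm_eq_abs, abs_of_nonneg (sq_nonneg _)]
  have tri : dist w.1 w.2 ≤ dist b w.1 + dist b w.2 := by
    rw [dist_comm b w.1]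
    exact dist_triangle _ _ _
  show dist w.1 w.2 ^ 2 ≤ _
  nlinarith [dist_nonneg (x := w.1) (y := w.2), dist_nonneg (x := b) (y := w.1),
    dist_nonneg (x := b) (y := w.2), sq_nonneg (dist b w.1 - dist b w.2)]

/-- Key contraction: the distance between barycenters is at most the transport
cost of any coupling. -/
lemma contraction (hX : CATZero X)
    {μ₁ μ₂ : Measure X} [IsProbabilityMeasure μ₁] [IsProbabilityMeasure μ₂]
    (hmom₁ : ∀ z : X, Integrable (fun x => dist z x ^ 2) μ₁)
    (hmom₂ : ∀ z : X, Integrable (fun x => dist z x ^ 2) μ₂)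
    (b₁ b₂ : X)
    (hb₁ : ∀ z : X, ∫ x, dist b₁ x ^ 2 ∂μ₁ ≤ ∫ x, dist z x ^ 2 ∂μ₁)
    (hb₂ : ∀ z : X, ∫ x, dist b₂ x ^ 2 ∂μ₂ ≤ ∫ x, dist z x ^ 2 ∂μ₂)
    (π : Measure (X × X)) (hπ : IsProbabilityMeasure π)
    (hf : π.map Prod.fst = μ₁) (hs : π.map Prod.snd = μ₂) :
    dist b₁ b₂ ≤ ∫ w : X × X, dist w.1 w.2 ∂π := by
  haveI := hπ
  have V1 := variance_ineq hX μ₁ hmom₁ b₁ hb₁ b₂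
  have V2 := variance_ineq hX μ₂ hmom₂ b₂ hb₂ b₁
  -- integrable pieces over π
  have g1 : Integrable (fun w : X × X => dist b₂ w.1 ^ 2) π :=
    integrable_fst hf (cont_dist_sq b₂) (hmom₁ b₂)
  have g2 : Integrable (fun w : X × X => dist b₁ w.2 ^ 2) π :=
    integrable_snd hs (cont_dist_sq b₁) (hmom₂ b₁)
  have g3 : Integrable (fun w : X × X => dist b₁ w.1 ^ 2) π :=
    integrable_fst hf (cont_dist_sq b₁) (hmom₁ b₁)
  have g4 : Integrable (fun w : X × X => dist b₂ w.2 ^ 2) π :=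
    integrable_snd hs (cont_dist_sq b₂) (hmom₂ b₂)
  have g12 : Integrable (fun w : X × X => dist b₂ w.1 ^ 2 + dist b₁ w.2 ^ 2) π := g1.add g2
  have g123 : Integrable
      (fun w : X × X => dist b₂ w.1 ^ 2 + dist b₁ w.2 ^ 2 - dist b₁ w.1 ^ 2) π := g12.sub g3
  have hsplit : ∫ w : X × X,
      (dist b₂ w.1 ^ 2 + dist b₁ w.2 ^ 2 - dist b₁ w.1 ^ 2 - dist b₂ w.2 ^ 2) ∂π
      = (∫ x, dist b₂ x ^ 2 ∂μ₁) + (∫ x, dist b₁ x ^ 2 ∂μ₂)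
        - (∫ x, dist b₁ x ^ 2 ∂μ₁) - (∫ x, dist b₂ x ^ 2 ∂μ₂) := by
    rw [integral_sub g123 g4, integral_sub g12 g3, integral_add g1 g2]
    rw [integral_fst hf (cont_dist_sq b₂), integral_snd hs (cont_dist_sq b₁),
      integral_fst hf (cont_dist_sq b₁), integral_snd hs (cont_dist_sq b₂)]
  have hmono : 2 * dist b₁ b₂ ^ 2 ≤ ∫ w : X × X,
      (dist b₂ w.1 ^ 2 + dist b₁ w.2 ^ 2 - dist b₁ w.1 ^ 2 - dist b₂ w.2 ^ 2) ∂π := by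
    rw [hsplit]
    have c1 : dist b₂ b₁ ^ 2 = dist b₁ b₂ ^ 2 := by rw [dist_comm]
    linarith
  have hdint : Integrable (fun w : X × X => dist w.1 w.2) π :=
    integrable_dist_coupling hf hs hmom₁ hmom₂ b₁
  have hcs : ∀ w : X × X,
      dist b₂ w.1 ^ 2 + dist b₁ w.2 ^ 2 - dist b₁ w.1 ^ 2 - dist b₂ w.2 ^ 2
        ≤ 2 * dist b₁ b₂ * dist w.1 w.2 := by
    intro w
    have := csq hX b₁ b₂ w.1 w.2
    linarith
  have hend : ∫ w : X × X,
      (dist b₂ w.1 ^ 2 + dist b₁ w.2 ^ 2 - dist b₁ w.1 ^ 2 - dist b₂ w.2 ^ 2) ∂π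
      ≤ ∫ w : X × X, 2 * dist b₁ b₂ * dist w.1 w.2 ∂π :=
    integral_mono (g123.sub g4) (hdint.const_mul _) hcs
  rw [integral_const_mul] at hend
  by_cases hD : dist b₁ b₂ = 0
  · rw [hD]
    exact integral_nonneg fun w => dist_nonneg
  · have hDpos : 0 < dist b₁ b₂ := lt_of_le_of_ne dist_nonneg (Ne.symm hD)
    nlinarith [hmono, hend]

end Meas

end BaryAux

/-- In a complete CAT(0) space, `d(𝔅(μ₁), 𝔅(μ₂)) ≤ W₁(μ₁,μ₂) ≤ W₂(μ₁,μ₂)`. -/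
theorem barycenter_lipschitz_wasserstein
    {X : Type*} [MetricSpace X] [CompleteSpace X] [SecondCountableTopology X]
    [MeasurableSpace X] [BorelSpace X]
    (hX : CATZero X)
    (μ₁ μ₂ : Measure X) [IsProbabilityMeasure μ₁] [IsProbabilityMeasure μ₂]
    (hmom₁ : ∀ z : X, Integrable (fun x => dist z x ^ 2) μ₁)
    (hmom₂ : ∀ z : X, Integrable (fun x => dist z x ^ 2) μ₂)
    (b₁ b₂ : X)
    (hb₁ : ∀ z : X, ∫ x, dist b₁ x ^ 2 ∂μ₁ ≤ ∫ x, dist z x ^ 2 ∂μ₁)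
    (hb₂ : ∀ z : X, ∫ x, dist b₂ x ^ 2 ∂μ₂ ≤ ∫ x, dist z x ^ 2 ∂μ₂) :
    dist b₁ b₂ ≤ wassersteinDist 1 μ₁ μ₂ ∧
      wassersteinDist 1 μ₁ μ₂ ≤ wassersteinDist 2 μ₁ μ₂ := by
    classical
  have hfst : (μ₁.prod μ₂).map Prod.fst = μ₁ := by
    rw [Measure.map_fst_prod]
    simp
  have hsnd : (μ₁.prod μ₂).map Prod.snd = μ₂ := by
    rw [Measure.map_snd_prod]
    simp
  have hprodprob : IsProbabilityMeasure (μ₁.prod μ₂) := inferInstance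
  have hbdd1 : BddBelow {r : ℝ | ∃ π : Measure (X × X), IsProbabilityMeasure π ∧
      π.map Prod.fst = μ₁ ∧ π.map Prod.snd = μ₂ ∧
      r = (∫ w : X × X, dist w.1 w.2 ^ (1:ℝ) ∂π) ^ (1 / (1:ℝ))} := by
    refine ⟨0, ?_⟩
    rintro r ⟨π, hπ, h1, h2, rfl⟩
    exact Real.rpow_nonneg
      (integral_nonneg fun w => Real.rpow_nonneg dist_nonneg _) _
  have hne1 : Set.Nonempty {r : ℝ | ∃ π : Measure (X × X), IsProbabilityMeasure π ∧
      π.map Prod.fst = μ₁ ∧ π.map Prod.snd = μ₂ ∧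
      r = (∫ w : X × X, dist w.1 w.2 ^ (1:ℝ) ∂π) ^ (1 / (1:ℝ))} :=
    ⟨_, μ₁.prod μ₂, hprodprob, hfst, hsnd, rfl⟩
  have hne2 : Set.Nonempty {r : ℝ | ∃ π : Measure (X × X), IsProbabilityMeasure π ∧
      π.map Prod.fst = μ₁ ∧ π.map Prod.snd = μ₂ ∧
      r = (∫ w : X × X, dist w.1 w.2 ^ (2:ℝ) ∂π) ^ (1 / (2:ℝ))} :=
    ⟨_, μ₁.prod μ₂, hprodprob, hfst, hsnd, rfl⟩
  constructor
  · apply le_csInf hne1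
    rintro r ⟨π, hπ, h1, h2, rfl⟩
    have hcon := BaryAux.contraction hX hmom₁ hmom₂ b₁ b₂ hb₁ hb₂ π hπ h1 h2
    have heq : (∫ w : X × X, dist w.1 w.2 ^ (1:ℝ) ∂π) ^ (1 / (1:ℝ))
        = ∫ w : X × X, dist w.1 w.2 ∂π := by
      simp [Real.rpow_one]
    rw [heq]
    exact hcon
  · apply le_csInf hne2
    rintro r ⟨π, hπ, h1, h2, rfl⟩
    haveI := hπ
    have hd1 : Integrable (fun w : X × X => dist w.1 w.2) π :=
      BaryAux.integrable_dist_coupling h1 h2 hmom₁ hmom₂ b₁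
    have hd2 : Integrable (fun w : X × X => dist w.1 w.2 ^ 2) π :=
      BaryAux.integrable_dist_sq_coupling h1 h2 hmom₁ hmom₂ b₁
    set c : ℝ := ∫ w : X × X, dist w.1 w.2 ∂π with hcdef
    have hc0 : 0 ≤ c := integral_nonneg fun w => dist_nonneg
    -- W₁ ≤ the candidate value for this coupling
    have hW1 : wassersteinDist 1 μ₁ μ₂ ≤ c := by
      apply csInf_le hbdd1
      refine ⟨π, hπ, h1, h2, ?_⟩
      simp [Real.rpow_one, hcdef]
    -- Cauchy–Schwarz: c ≤ sqrt (∫ d²)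
    have hvar : 0 ≤ ∫ w : X × X, (dist w.1 w.2 - c) ^ 2 ∂π :=
      integral_nonneg fun w => sq_nonneg _
    have hexp : ∫ w : X × X, (dist w.1 w.2 - c) ^ 2 ∂π
        = (∫ w : X × X, dist w.1 w.2 ^ 2 ∂π) - c ^ 2 := by
      have e : (fun w : X × X => (dist w.1 w.2 - c) ^ 2)
          = fun w : X × X => dist w.1 w.2 ^ 2 - (2*c) * dist w.1 w.2 + c ^ 2 := by
        funext w
        ring
      rw [e]
      have i1 : Integrable (fun w : X × X => dist w.1 w.2 ^ 2
          - (2*c) * dist w.1 w.2) π := hd2.sub (hd1.const_mul _)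
      rw [integral_add i1 (integrable_const _), integral_sub hd2 (hd1.const_mul _),
        integral_const_mul, integral_const]
      simp [measure_univ]
      ring
    have hcs : c ^ 2 ≤ ∫ w : X × X, dist w.1 w.2 ^ 2 ∂π := by linarith
    have hint2 : ∫ w : X × X, dist w.1 w.2 ^ (2:ℝ) ∂π
        = ∫ w : X × X, dist w.1 w.2 ^ 2 ∂π := by
      congr 1
      funext w
      rw [show ((2:ℝ)) = ((2:ℕ) : ℝ) by norm_num, Real.rpow_natCast]
    have hfinal : c ≤ (∫ w : X × X, dist w.1 w.2 ^ (2:ℝ) ∂π) ^ (1 / (2:ℝ)) := by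
      rw [hint2, ← Real.sqrt_eq_rpow]
      calc c = Real.sqrt (c ^ 2) := by rw [Real.sqrt_sq hc0]
        _ ≤ Real.sqrt (∫ w : X × X, dist w.1 w.2 ^ 2 ∂π) := Real.sqrt_le_sqrt hcs
    exact hW1.trans hfinal
end
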